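/- Let λ be a Perron number whose degree [ℚ(λ):ℚ] is odd. Then for every positive integer k, ℚ(λ + λ⁻¹) = ℚ(λᵏ + λ⁻ᵏ); moreover these fields all equal ℚ(λ). -/

import Mathlib

open Polynomial

/-- The Galois conjugates of a real algebraic number: the complex roots of its
minimal polynomial over `ℚ`. -/
def galoisConjugates (x : ℝ) : Set ℂ :=
  {z : ℂ | Polynomial.aeval z (minpoly ℚ x) = 0}

/-- A Perron number: a real algebraic integer `l > 1` all of whose Galois conjugates
other than `l` itself have modulus strictly less than `l`. -/
def IsPerron (l : ℝ) : Prop :=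
  1 < l ∧ IsIntegral ℤ l ∧
    ∀ z : ℂ, z ∈ galoisConjugates l → z ≠ (l : ℂ) → ‖z‖ < l

open IntermediateField Module in
set_option synthInstance.maxHeartbeats 1000000 in
set_option maxHeartbeats 4000000 in
/-- Key lemma: for a Perron number of odd degree, `ℚ(λᵏ + λ⁻ᵏ) = ℚ(λ)`. -/
theorem perron_aux (l : ℝ) (hl : IsPerron l)
    (hodd : Odd (minpoly ℚ l).natDegree) (k : ℕ) (hk : 0 < k) :
    IntermediateField.adjoin ℚ {l ^ k + (l ^ k)⁻¹} =
      IntermediateField.adjoin ℚ {l} := by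
  obtain ⟨hl1, hint, hconj⟩ := hl
  have hl0 : (0:ℝ) < l := lt_trans one_pos hl1
  have hlne : l ≠ 0 := ne_of_gt hl0
  have hlQ : IsIntegral ℚ l := hint.tower_top
  set K : IntermediateField ℚ ℝ := IntermediateField.adjoin ℚ {l} with hK
  have hlK : l ∈ K := IntermediateField.mem_adjoin_simple_self ℚ l
  set lK : K := ⟨l, hlK⟩ with hlKdef
  have hval : algebraMap K ℝ lK = l := rfl
  haveI : FiniteDimensional ℚ K := IntermediateField.adjoin.finiteDimensional hlQ
  have hd : finrank ℚ K = (minpoly ℚ l).natDegree := IntermediateField.adjoin.finrank hlQ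
  have hlKne : lK ≠ 0 := by
    intro h
    exact hlne (by rw [← hval, h, map_zero])
  set u : K := lK ^ k with hu
  have hune : u ≠ 0 := pow_ne_zero _ hlKne
  set tK : K := u + u⁻¹ with htKdef
  set FK : IntermediateField ℚ K := IntermediateField.adjoin ℚ {tK} with hFK
  have htK : tK ∈ FK := IntermediateField.mem_adjoin_simple_self ℚ tK
  haveI : FiniteDimensional (↥FK) (↥K) := FiniteDimensional.right ℚ (↥FK) (↥K)
  haveI : CharZero (↥FK) := charZero_of_injective_algebraMap (algebraMap ℚ (↥FK)).injective
  -- Step 1 : u = lK ^ k ∈ FK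
  have hiu : IsIntegral (↥FK) u := IsIntegral.of_finite (↥FK) u
  have hu_mem : u ∈ FK := by
    set p : Polynomial (↥FK) := X ^ 2 - C (⟨tK, htK⟩ : FK) * X + 1 with hp
    have hdeg : p.natDegree = 2 := by
      rw [hp]; compute_degree!
    have hp0 : p ≠ 0 := by
      intro h; rw [h] at hdeg; simp at hdeg
    have hroot : aeval u p = 0 := by
      rw [hp]
      simp only [map_add, map_sub, map_mul, map_pow, aeval_X, aeval_C, map_one]
      have hC : algebraMap (↥FK) (↥K) (⟨tK, htK⟩ : FK) = tK := rfl
      rw [hC, htKdef]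
      field_simp
      ring
    have hdvd : minpoly (↥FK) u ∣ p := minpoly.dvd (↥FK) u hroot
    have hle2 : (minpoly (↥FK) u).natDegree ≤ 2 := hdeg ▸ natDegree_le_of_dvd hdvd hp0
    have hpos : 0 < (minpoly (↥FK) u).natDegree := minpoly.natDegree_pos hiu
    have hdvdd : (minpoly (↥FK) u).natDegree ∣ finrank ℚ K := by
      have h1 : finrank (↥FK) (IntermediateField.adjoin (↥FK) ({u} : Set K)) = (minpoly (↥FK) u).natDegree :=
        IntermediateField.adjoin.finrank hiu
      have h2 : finrank (↥FK) (IntermediateField.adjoin (↥FK) ({u} : Set K)) ∣ finrank (↥FK) (↥K) :=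
        ⟨finrank (IntermediateField.adjoin (↥FK) ({u} : Set K)) (↥K), (Module.finrank_mul_finrank (↥FK) (IntermediateField.adjoin (↥FK) ({u} : Set K)) (↥K)).symm⟩
      have h3 : finrank (↥FK) (↥K) ∣ finrank ℚ K :=
        Dvd.intro_left _ (Module.finrank_mul_finrank ℚ (↥FK) (↥K))
      exact h1 ▸ h2.trans h3
    have hodd' : Odd (finrank ℚ K) := hd ▸ hodd
    have hne2 : (minpoly (↥FK) u).natDegree ≠ 2 := by
      intro h
      rw [h] at hdvdd
      exact (Nat.not_even_iff_odd.mpr hodd') (even_iff_two_dvd.mpr hdvdd)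
    have h1 : (minpoly (↥FK) u).natDegree = 1 := by omega
    obtain ⟨a, ha⟩ := minpoly.natDegree_eq_one_iff.mp h1
    rw [← ha]; exact a.2
  -- Step 2 : lK ∈ FK
  have hiL : IsIntegral (↥FK) lK := IsIntegral.of_finite (↥FK) lK
  have hlK_mem : lK ∈ FK := by
    set m : Polynomial (↥FK) := minpoly (↥FK) lK with hm
    set φ : (↥FK) →+* ℂ :=
      (algebraMap ℝ ℂ).comp ((algebraMap K ℝ).comp (algebraMap (↥FK) (↥K))) with hφ
    set P : Polynomial ℂ := m.map φ with hP
    have hm0 : m ≠ 0 := minpoly.ne_zero hiL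
    have hP0 : P ≠ 0 := Polynomial.map_ne_zero hm0
    have hsep : m.Separable := (minpoly.irreducible hiL).separable
    have hPsep : P.Separable := hsep.map
    have hcard : Fintype.card (P.rootSet ℂ) = P.natDegree :=
      Polynomial.card_rootSet_eq_natDegree hPsep (IsAlgClosed.splits (P.map (algebraMap ℂ ℂ)))
    have hroots : ∀ z ∈ P.rootSet ℂ, z = (l : ℂ) := by
      intro z hz
      have hz0 : eval₂ φ z m = 0 := by
        have h := (Polynomial.mem_rootSet.mp hz).2
        rw [Polynomial.eval₂_eq_eval_map]
        simpa using h
      have hq : aeval lK (X ^ k - C (⟨u, hu_mem⟩ : FK)) = 0 := by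
        simp only [map_sub, map_pow, aeval_X, aeval_C]
        have : algebraMap (↥FK) (↥K) (⟨u, hu_mem⟩ : FK) = u := rfl
        rw [this, hu, sub_self]
      obtain ⟨c, hc⟩ := minpoly.dvd (↥FK) lK hq
      have hzk : z ^ k = (l : ℂ) ^ k := by
        have := congrArg (eval₂ φ z) hc.symm
        rw [eval₂_mul, hz0, zero_mul, eval₂_sub, eval₂_pow, eval₂_X, eval₂_C] at this
        have hφc : φ (⟨u, hu_mem⟩ : FK) = (l : ℂ) ^ k := by
          rw [hφ]
          simp only [RingHom.coe_comp, Function.comp_apply]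
          have h1 : algebraMap (↥FK) (↥K) (⟨u, hu_mem⟩ : FK) = u := rfl
          rw [h1, hu, map_pow, hval]
          norm_cast
        rw [hφc] at this
        linear_combination -this
      have hzconj : (Polynomial.aeval z (minpoly ℚ l)) = 0 := by
        have hminEq : minpoly ℚ lK = minpoly ℚ l := by
          have := minpoly.algHom_eq K.val (algebraMap K ℝ).injective lK
          rw [show K.val lK = l from hval] at this
          exact this.symm
        have hdvd : m ∣ (minpoly ℚ lK).map (algebraMap ℚ (↥FK)) :=
          minpoly.dvd_map_of_isScalarTower ℚ (↥FK) lK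
        obtain ⟨c', hc'⟩ := hdvd
        have := congrArg (eval₂ φ z) hc'.symm
        rw [eval₂_mul, hz0, zero_mul, eval₂_map] at this
        have hcomp : φ.comp (algebraMap ℚ (↥FK)) = algebraMap ℚ ℂ := Subsingleton.elim _ _
        rw [hcomp, hminEq] at this
        rw [Polynomial.aeval_def]
        exact this.symm
      by_contra hne
      have habs := hconj z hzconj hne
      have h1 : ‖z‖ ^ k = l ^ k := by
        have := congrArg norm hzk
        rwa [norm_pow, norm_pow, Complex.norm_real, Real.norm_eq_abs, abs_of_pos hl0] at this
      have h2 : ‖z‖ ^ k < l ^ k :=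
        pow_lt_pow_left₀ habs (norm_nonneg z) hk.ne'
      exact absurd h1 (ne_of_lt h2)
    have hle1 : P.natDegree ≤ 1 := by
      rw [← hcard]
      exact Fintype.card_le_one_iff.mpr fun a b =>
        Subtype.ext ((hroots a a.2).trans (hroots b b.2).symm)
    have hdegeq : m.natDegree = P.natDegree := (natDegree_map φ).symm
    have hpos : 0 < m.natDegree := minpoly.natDegree_pos hiL
    have h1 : (minpoly (↥FK) lK).natDegree = 1 := by rw [← hm]; omega
    obtain ⟨a, ha⟩ := minpoly.natDegree_eq_one_iff.mp h1
    rw [← ha]; exact a.2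
  -- Final assembly
  have hmap : FK.map K.val = IntermediateField.adjoin ℚ {l ^ k + (l ^ k)⁻¹} := by
    rw [hFK]; erw [IntermediateField.adjoin_map]
    congr 1
    try rw [Set.image_singleton]
    try congr 1
    try rw [htKdef, hu]
    try push_cast
    try rfl
    try ring
  have hlF : l ∈ IntermediateField.adjoin ℚ {l ^ k + (l ^ k)⁻¹} := by
    rw [← hmap]
    exact ⟨lK, hlK_mem, rfl⟩
  apply le_antisymm
  · rw [IntermediateField.adjoin_le_iff]
    rintro x rfl
    exact K.add_mem (K.pow_mem hlK k) (K.inv_mem (K.pow_mem hlK k))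
  · rw [hK, IntermediateField.adjoin_le_iff]
    rintro x rfl
    exact hlF

theorem perron_traces_odd_degree (l : ℝ) (hl : IsPerron l)
    (hodd : Odd (minpoly ℚ l).natDegree) :
    ∀ k : ℕ, 0 < k →
      IntermediateField.adjoin ℚ {l + l⁻¹} =
        IntermediateField.adjoin ℚ {l ^ k + (l ^ k)⁻¹} ∧
      IntermediateField.adjoin ℚ {l ^ k + (l ^ k)⁻¹} =
        IntermediateField.adjoin ℚ {l} := by
  intro k hk
  have h1 := perron_aux l hl hodd 1 one_pos
  rw [pow_one] at h1
  have hkk := perron_aux l hl hodd k hk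
  exact ⟨h1.trans hkk.symm, hkk⟩
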